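/- In an ordered linear probing hash table, if there exists an interval $P = [r, s-1]$ with insertion surplus $q$, then the crossing number satisfies $c_s \ge q$. -/

import Mathlib

open scoped Classical

/-- An operation on an ordered linear probing hash table: insertion or deletion of
a key with the given hash. -/
inductive LPOp
  | ins (h : ℕ)
  | del (h : ℕ)

def LPOp.hash : LPOp → ℕ
  | .ins h => h
  | .del h => h

def LPOp.isIns : LPOp → Prop
  | .ins _ => True
  | .del _ => False

/-- The peak of an insertion with hash `h` given the multiset `a` of currently
available resources (hashes of unused tombstones and positions of unused free
slots): in ordered linear probing the insertion uses the smallest available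
resource of value at least `h`. -/
noncomputable def LPpeak (a : Multiset ℕ) (h : ℕ) : ℕ :=
  sInf {v | v ∈ a ∧ h ≤ v}

/-- The trace of `(hash, peak)` pairs of the insertions of an operation sequence,
starting from the multiset `a` of initially free slot positions: a deletion adds a
tombstone resource at its hash, and an insertion consumes the resource given by its
peak. -/
noncomputable def LPtrace : Multiset ℕ → List LPOp → List (ℕ × ℕ)
  | _, [] => []
  | a, .del h :: rest => LPtrace (h ::ₘ a) rest
  | a, .ins h :: rest => (h, LPpeak a h) :: LPtrace (a.erase (LPpeak a h)) rest

/-- The run is valid: every insertion finds an available resource of value at least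
its hash (the table never overflows). -/
def LPValid : Multiset ℕ → List LPOp → Prop
  | _, [] => True
  | a, .del h :: rest => LPValid (h ::ₘ a) rest
  | a, .ins h :: rest => (∃ v ∈ a, h ≤ v) ∧ LPValid (a.erase (LPpeak a h)) rest

/-- The crossing number `c_s`: the number of insertions with hash `< s` whose peak is
`≥ s` (i.e. that use a tombstone of hash `≥ s` or a free slot in position `≥ s`). -/
noncomputable def LPcrossing (F : Multiset ℕ) (ops : List LPOp) (s : ℕ) : ℕ :=
  ((LPtrace F ops).filter (fun hp => decide (hp.1 < s ∧ s ≤ hp.2))).length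

/-- The operation at index `i` (junk deletion if out of range). -/
def opAt (ops : List LPOp) (i : ℕ) : LPOp := ops.getD i (.del 0)

/-- `A` is a downward-closed set of indices of operations hashing into `[r, s-1]`:
together with any operation `u` it contains every earlier operation `v` hashing into
`[r, s-1]` with `hash v ≥ hash u`. -/
def DownClosed (ops : List LPOp) (r s : ℕ) (A : Finset ℕ) : Prop :=
  (∀ i ∈ A, i < ops.length ∧ r ≤ (opAt ops i).hash ∧ (opAt ops i).hash < s) ∧
  (∀ i ∈ A, ∀ j < i, j < ops.length →
    r ≤ (opAt ops j).hash → (opAt ops j).hash < s →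
    (opAt ops i).hash ≤ (opAt ops j).hash → j ∈ A)

/-- `max(0, #insertions − #deletions)` over an index set `A` (truncated ℕ
subtraction implements the `max` with `0`). -/
noncomputable def subsetSurplus (ops : List LPOp) (A : Finset ℕ) : ℕ :=
  (A.filter (fun i => (opAt ops i).isIns)).card -
    (A.filter (fun i => ¬ (opAt ops i).isIns)).card

/-- The insertion surplus of the interval `P = [r, s-1]`: the maximum insertion
surplus of a downward-closed subset of the operations hashing into `P`, minus the
number of free slots initially in `P`. -/
noncomputable def intervalSurplus (F : Multiset ℕ) (ops : List LPOp) (r s : ℕ) : ℤ :=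
  ((((Finset.range ops.length).powerset.filter (DownClosed ops r s)).sup
      (subsetSurplus ops) : ℕ) : ℤ)
    - ((F.filter (fun v => r ≤ v ∧ v < s)).card : ℤ)


-- auxiliary
lemma opAt_cons_zero (op : LPOp) (rest : List LPOp) : opAt (op :: rest) 0 = op := rfl

lemma opAt_cons_succ (op : LPOp) (rest : List LPOp) (i : ℕ) :
    opAt (op :: rest) (i + 1) = opAt rest i := rfl

noncomputable def insCnt : List LPOp → (ℕ → Bool) → ℕ
  | [], _ => 0
  | op :: rest, m => (if m 0 = true ∧ op.isIns then 1 else 0) + insCnt rest (fun i => m (i+1))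

noncomputable def delCnt : List LPOp → (ℕ → Bool) → ℕ
  | [], _ => 0
  | op :: rest, m => (if m 0 = true ∧ ¬ op.isIns then 1 else 0) + delCnt rest (fun i => m (i+1))

def thSet (s : ℕ) (ops : List LPOp) (m : ℕ → Bool) : Set ℕ :=
  insert s {h | ∃ i, m i = true ∧ i < ops.length ∧ (opAt ops i).isIns ∧ (opAt ops i).hash = h}

noncomputable def theta (s : ℕ) (ops : List LPOp) (m : ℕ → Bool) : ℕ := sInf (thSet s ops m)

lemma theta_le_s (s : ℕ) (ops : List LPOp) (m : ℕ → Bool) : theta s ops m ≤ s :=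
  Nat.sInf_le (Set.mem_insert _ _)

lemma theta_mem (s : ℕ) (ops : List LPOp) (m : ℕ → Bool) : theta s ops m ∈ thSet s ops m :=
  Nat.sInf_mem ⟨s, Set.mem_insert _ _⟩

lemma theta_le (s : ℕ) (ops : List LPOp) (m : ℕ → Bool) (i : ℕ) (hm : m i = true)
    (hlen : i < ops.length) (hins : (opAt ops i).isIns) : theta s ops m ≤ (opAt ops i).hash :=
  Nat.sInf_le (Set.mem_insert_iff.mpr (Or.inr ⟨i, hm, hlen, hins, rfl⟩))

lemma theta_cons_le (s : ℕ) (op : LPOp) (rest : List LPOp) (m : ℕ → Bool) :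
    theta s (op :: rest) m ≤ theta s rest (fun i => m (i+1)) := by
  rcases theta_mem s rest (fun i => m (i+1)) with h | ⟨i, h1, h2, h3, h4⟩
  · rw [h]; exact theta_le_s _ _ _
  · calc theta s (op :: rest) m ≤ (opAt (op :: rest) (i+1)).hash :=
          theta_le s _ m (i+1) h1 (by simpa using Nat.succ_lt_succ h2)
            (by rw [opAt_cons_succ]; exact h3)
      _ = theta s rest (fun i => m (i+1)) := by rw [opAt_cons_succ]; exact h4

lemma avail_mono {a a' : Multiset ℕ} (haa : a' ≤ a) {t t' s : ℕ} (ht : t ≤ t') :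
    (Multiset.filter (fun v => t' ≤ v ∧ v < s) a').card ≤
      (Multiset.filter (fun v => t ≤ v ∧ v < s) a).card := by
  apply Multiset.card_le_card
  calc Multiset.filter (fun v => t' ≤ v ∧ v < s) a'
      ≤ Multiset.filter (fun v => t' ≤ v ∧ v < s) a := Multiset.filter_le_filter _ haa
    _ ≤ Multiset.filter (fun v => t ≤ v ∧ v < s) a :=
        Multiset.monotone_filter_right _ (fun v hv => ⟨le_trans ht hv.1, hv.2⟩)

lemma crossing_del (a : Multiset ℕ) (h : ℕ) (rest : List LPOp) (s : ℕ) :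
    LPcrossing a (.del h :: rest) s = LPcrossing (h ::ₘ a) rest s := by
  simp [LPcrossing, LPtrace]

lemma crossing_ins (a : Multiset ℕ) (h : ℕ) (rest : List LPOp) (s : ℕ) :
    LPcrossing a (.ins h :: rest) s
      = (if h < s ∧ s ≤ LPpeak a h then 1 else 0)
        + LPcrossing (a.erase (LPpeak a h)) rest s := by
  simp only [LPcrossing, LPtrace, List.filter_cons]
  by_cases hc : h < s ∧ s ≤ LPpeak a h <;> simp [hc, Nat.add_comm]

lemma mainLemma (r s : ℕ) :
    ∀ (ops : List LPOp) (a : Multiset ℕ) (m : ℕ → Bool),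
    LPValid a ops →
    (∀ i, m i = true → i < ops.length ∧ r ≤ (opAt ops i).hash ∧ (opAt ops i).hash < s) →
    (∀ i, m i = true → ∀ j, j < i →
      r ≤ (opAt ops j).hash → (opAt ops j).hash < s →
      (opAt ops i).hash ≤ (opAt ops j).hash → m j = true) →
    insCnt ops m ≤ delCnt ops m + LPcrossing a ops s +
      (Multiset.filter (fun v => theta s ops m ≤ v ∧ v < s) a).card := by
  intro ops
  induction ops with
  | nil => intro a m _ _ _; simp [insCnt, delCnt]
  | cons op rest ih =>
    intro a m hval hh hdc
    have hh' : ∀ i, (fun i => m (i+1)) i = true →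
        i < rest.length ∧ r ≤ (opAt rest i).hash ∧ (opAt rest i).hash < s := by
      intro i hi
      have := hh (i+1) hi
      rw [opAt_cons_succ] at this
      exact ⟨by simpa using this.1, this.2.1, this.2.2⟩
    have hdc' : ∀ i, (fun i => m (i+1)) i = true → ∀ j, j < i →
        r ≤ (opAt rest j).hash → (opAt rest j).hash < s →
        (opAt rest i).hash ≤ (opAt rest j).hash → (fun i => m (i+1)) j = true := by
      intro i hi j hj h1 h2 h3
      exact hdc (i+1) hi (j+1) (by omega) (by rwa [opAt_cons_succ]) (by rwa [opAt_cons_succ])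
        (by rwa [opAt_cons_succ, opAt_cons_succ])
    have hthc := theta_cons_le s op rest m
    match op with
    | .del h =>
      have hval' : LPValid (h ::ₘ a) rest := hval
      have IH := ih (h ::ₘ a) (fun i => m (i+1)) hval' hh' hdc'
      rw [crossing_del]
      by_cases h0 : m 0 = true
      · have hins : insCnt (.del h :: rest) m = insCnt rest (fun i => m (i+1)) := by
          simp [insCnt, LPOp.isIns]
        have hdel : delCnt (.del h :: rest) m = 1 + delCnt rest (fun i => m (i+1)) := by
          simp [delCnt, LPOp.isIns, h0]
        have hav : (Multiset.filter (fun v => theta s rest (fun i => m (i+1)) ≤ v ∧ v < s)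
              (h ::ₘ a)).card ≤
            (Multiset.filter (fun v => theta s (.del h :: rest) m ≤ v ∧ v < s) a).card + 1 := by
          rw [Multiset.filter_cons]
          by_cases hc : theta s rest (fun i => m (i+1)) ≤ h ∧ h < s <;>
            · simp only [hc, if_pos, if_neg, not_false_iff]
              simp [hc]
              have := avail_mono (le_refl a) (s := s) hthc
              omega
        rw [hins, hdel]
        omega
      · -- not selected deletion: h is not in [theta', s)
        have hins : insCnt (.del h :: rest) m = insCnt rest (fun i => m (i+1)) := by
          simp [insCnt, LPOp.isIns]
        have hdel : delCnt (.del h :: rest) m = delCnt rest (fun i => m (i+1)) := by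
          simp [delCnt, LPOp.isIns, h0]
        have hns : ¬ (theta s rest (fun i => m (i+1)) ≤ h ∧ h < s) := by
          rintro ⟨hth, hhs⟩
          rcases theta_mem s rest (fun i => m (i+1)) with heq | ⟨i, h1, h2, h3, h4⟩
          · omega
          · have hri : r ≤ (opAt rest i).hash := (hh' i h1).2.1
            have : m 0 = true := by
              apply hdc (i+1) h1 0 (Nat.succ_pos i)
              · rw [opAt_cons_zero]; show r ≤ h; omega
              · rw [opAt_cons_zero]; exact hhs
              · rw [opAt_cons_succ, opAt_cons_zero]; show _ ≤ h; omega
            exact h0 this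
        have hav : (Multiset.filter (fun v => theta s rest (fun i => m (i+1)) ≤ v ∧ v < s)
              (h ::ₘ a)).card ≤
            (Multiset.filter (fun v => theta s (.del h :: rest) m ≤ v ∧ v < s) a).card := by
          rw [Multiset.filter_cons, if_neg hns]
          simpa using avail_mono (le_refl a) (s := s) hthc
        rw [hins, hdel]
        omega
    | .ins h =>
      obtain ⟨hex, hval'⟩ := hval
      have hp : LPpeak a h ∈ a ∧ h ≤ LPpeak a h := by
        obtain ⟨v, hv, hhv⟩ := hex
        exact Nat.sInf_mem (⟨v, hv, hhv⟩ : Set.Nonempty {v | v ∈ a ∧ h ≤ v})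
      have IH := ih (a.erase (LPpeak a h)) (fun i => m (i+1)) hval' hh' hdc'
      rw [crossing_ins]
      by_cases h0 : m 0 = true
      · have hrange := hh 0 h0
        rw [opAt_cons_zero] at hrange
        have hhr : r ≤ h := hrange.2.1
        have hhs : h < s := hrange.2.2
        have hins : insCnt (.ins h :: rest) m = 1 + insCnt rest (fun i => m (i+1)) := by
          simp [insCnt, LPOp.isIns, h0]
        have hdel : delCnt (.ins h :: rest) m = delCnt rest (fun i => m (i+1)) := by
          simp [delCnt, LPOp.isIns]
        have hth : theta s (.ins h :: rest) m ≤ h :=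
          theta_le s _ m 0 h0 (by simp) trivial
        by_cases hps : s ≤ LPpeak a h
        · have hav := avail_mono (Multiset.erase_le (LPpeak a h) a) (s := s) hthc
          rw [hins, hdel, if_pos ⟨hhs, hps⟩]
          omega
        · -- peak lands in [theta, s)
          have hpin : theta s (.ins h :: rest) m ≤ LPpeak a h ∧ LPpeak a h < s :=
            ⟨le_trans hth hp.2, by omega⟩
          have hav : (Multiset.filter (fun v => theta s rest (fun i => m (i+1)) ≤ v ∧ v < s)
                (a.erase (LPpeak a h))).card + 1 ≤
              (Multiset.filter (fun v => theta s (.ins h :: rest) m ≤ v ∧ v < s) a).card := by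
            have hcons : a = LPpeak a h ::ₘ a.erase (LPpeak a h) := (Multiset.cons_erase hp.1).symm
            conv_rhs => rw [hcons]
            rw [Multiset.filter_cons, if_pos hpin]
            have := avail_mono (le_refl (a.erase (LPpeak a h))) (s := s) hthc
            simpa using this
          rw [hins, hdel]
          omega
      · have hins : insCnt (.ins h :: rest) m = insCnt rest (fun i => m (i+1)) := by
          simp [insCnt, h0]
        have hdel : delCnt (.ins h :: rest) m = delCnt rest (fun i => m (i+1)) := by
          simp [delCnt, h0]
        have hav := avail_mono (Multiset.erase_le (LPpeak a h) a) (s := s) hthc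
        rw [hins, hdel]
        omega

lemma insCnt_eq (ops : List LPOp) (m : ℕ → Bool) :
    insCnt ops m
      = ((Finset.range ops.length).filter (fun i => m i = true ∧ (opAt ops i).isIns)).card := by
  induction ops generalizing m with
  | nil => simp [insCnt]
  | cons op rest ih =>
    rw [Finset.card_filter, List.length_cons, Finset.sum_range_succ']
    simp only [opAt_cons_succ, opAt_cons_zero]
    rw [show insCnt (op :: rest) m
        = (if m 0 = true ∧ op.isIns then 1 else 0) + insCnt rest (fun i => m (i+1)) from rfl,
      ih, Finset.card_filter, add_comm]
    congr

lemma delCnt_eq (ops : List LPOp) (m : ℕ → Bool) :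
    delCnt ops m
      = ((Finset.range ops.length).filter (fun i => m i = true ∧ ¬ (opAt ops i).isIns)).card := by
  induction ops generalizing m with
  | nil => simp [delCnt]
  | cons op rest ih =>
    rw [Finset.card_filter, List.length_cons, Finset.sum_range_succ']
    simp only [opAt_cons_succ, opAt_cons_zero]
    rw [show delCnt (op :: rest) m
        = (if m 0 = true ∧ ¬ op.isIns then 1 else 0) + delCnt rest (fun i => m (i+1)) from rfl,
      ih, Finset.card_filter, add_comm]
    congr

lemma r_le_theta {r s : ℕ} (hrs : r ≤ s) (ops : List LPOp) (m : ℕ → Bool)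
    (hh : ∀ i, m i = true → i < ops.length ∧ r ≤ (opAt ops i).hash ∧ (opAt ops i).hash < s) :
    r ≤ theta s ops m := by
  rcases theta_mem s ops m with heq | ⟨i, h1, h2, h3, h4⟩
  · omega
  · have := (hh i h1).2.1
    omega


/-- If there exists an interval `P = [r, s-1]` with insertion
surplus `q`, then the crossing number satisfies `c_s ≥ q`. -/
theorem stmt14 (F : Multiset ℕ) (ops : List LPOp) (hvalid : LPValid F ops)
    (r s : ℕ) (hrs : r < s) (q : ℤ) (hq : intervalSurplus F ops r s = q) :
    q ≤ (LPcrossing F ops s : ℤ) := by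
  subst hq
  unfold intervalSurplus
  rw [sub_le_iff_le_add]
  have key : ((Finset.range ops.length).powerset.filter (DownClosed ops r s)).sup
      (subsetSurplus ops)
      ≤ LPcrossing F ops s + (F.filter (fun v => r ≤ v ∧ v < s)).card := by
    apply Finset.sup_le
    intro A hA
    rw [Finset.mem_filter, Finset.mem_powerset] at hA
    obtain ⟨hsub, hdc1, hdc2⟩ := hA
    set m : ℕ → Bool := fun i => decide (i ∈ A) with hm
    have hmem : ∀ i, m i = true ↔ i ∈ A := by intro i; simp [hm]
    have hh : ∀ i, m i = true → i < ops.length ∧ r ≤ (opAt ops i).hash ∧ (opAt ops i).hash < s :=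
      fun i hi => hdc1 i ((hmem i).mp hi)
    have hdc : ∀ i, m i = true → ∀ j, j < i →
        r ≤ (opAt ops j).hash → (opAt ops j).hash < s →
        (opAt ops i).hash ≤ (opAt ops j).hash → m j = true := by
      intro i hi j hj h1 h2 h3
      have hi' := (hmem i).mp hi
      have hjlen : j < ops.length := lt_trans hj (hdc1 i hi').1
      exact (hmem j).mpr (hdc2 i hi' j hj hjlen h1 h2 h3)
    have main := mainLemma r s ops F m hvalid hh hdc
    have hbridgeI : (A.filter (fun i => (opAt ops i).isIns)).card = insCnt ops m := by
      rw [insCnt_eq]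
      congr 1
      ext i
      simp only [Finset.mem_filter, Finset.mem_range, hmem]
      exact ⟨fun ⟨h1, h2⟩ => ⟨(hdc1 i h1).1, h1, h2⟩, fun ⟨_, h1, h2⟩ => ⟨h1, h2⟩⟩
    have hbridgeD : (A.filter (fun i => ¬ (opAt ops i).isIns)).card = delCnt ops m := by
      rw [delCnt_eq]
      congr 1
      ext i
      simp only [Finset.mem_filter, Finset.mem_range, hmem]
      exact ⟨fun ⟨h1, h2⟩ => ⟨(hdc1 i h1).1, h1, h2⟩, fun ⟨_, h1, h2⟩ => ⟨h1, h2⟩⟩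
    have hthr : r ≤ theta s ops m := r_le_theta (le_of_lt hrs) ops m hh
    have hav : (Multiset.filter (fun v => theta s ops m ≤ v ∧ v < s) F).card ≤
        (F.filter (fun v => r ≤ v ∧ v < s)).card := avail_mono (le_refl F) hthr
    rw [subsetSurplus, hbridgeI, hbridgeD]
    omega
  have := Int.ofNat_le.mpr key
  push_cast at this ⊢
  linarith
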